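/- Let 0 < H < 1/2. There is a constant C > 0 (one may take C = 2) such that for every integer m ≥ 0 and every integer n ≥ 2, n^{−2} Σ_{1≤j<i≤n−1} R_H(i/n, j/n)^{2m} (i/n)^{−H(2m+1)} (j/n)^{−H(2m+1)} ≤ C/(2Hm − H + 1). -/

import Mathlib

open MeasureTheory Filter Topology Real

section Aux
open Real NNReal

lemma aux_subadd {x y p : ℝ} (hx : 0 ≤ x) (hy : 0 ≤ y) (hp : 0 ≤ p) (hp1 : p ≤ 1) :
    (x + y) ^ p ≤ x ^ p + y ^ p := by
  have h := NNReal.rpow_add_le_add_rpow x.toNNReal y.toNNReal hp hp1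
  have hxy : ((x.toNNReal + y.toNNReal : ℝ≥0) : ℝ) = x + y := by
    simp [Real.coe_toNNReal _ hx, Real.coe_toNNReal _ hy]
  calc (x + y) ^ p = (((x.toNNReal + y.toNNReal : ℝ≥0) : ℝ)) ^ p := by rw [hxy]
    _ = (((x.toNNReal + y.toNNReal) ^ p : ℝ≥0) : ℝ) := by
        rw [← NNReal.coe_rpow]
    _ ≤ ((x.toNNReal ^ p + y.toNNReal ^ p : ℝ≥0) : ℝ) := by exact_mod_cast h
    _ = x ^ p + y ^ p := by
        push_cast [NNReal.coe_rpow, Real.coe_toNNReal _ hx, Real.coe_toNNReal _ hy]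
        ring

lemma sum_rpow_pos {a : ℝ} (ha : 0 ≤ a) (i : ℕ) :
    ∑ j ∈ Finset.Ico 1 i, (j : ℝ) ^ a ≤ (i : ℝ) ^ (a + 1) / (a + 1) := by
  have hap : (0:ℝ) < a + 1 := by linarith
  induction i with
  | zero => simp [Real.zero_rpow hap.ne']
  | succ k ih =>
    rcases Nat.eq_zero_or_pos k with rfl | hk
    · simp
      positivity
    · rw [Finset.sum_Ico_succ_top hk]
      have hx : (1:ℝ) ≤ (k:ℝ) := by exact_mod_cast hk
      have hx0 : (0:ℝ) < (k:ℝ) := by linarith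
      -- Bernoulli: (1 + 1/k)^(a+1) ≥ 1 + (a+1)/k
      have hb := one_add_mul_self_le_rpow_one_add (s := 1 / (k:ℝ))
        (by nlinarith [(by positivity : (0:ℝ) ≤ 1/(k:ℝ))]) (p := a + 1) (by linarith)
      have hmul : ((k:ℝ)) ^ (a+1) * (1 + 1/(k:ℝ)) ^ (a+1) = ((k:ℝ) + 1) ^ (a+1) := by
        rw [← Real.mul_rpow hx0.le (by positivity)]
        congr 1
        field_simp
      have key : (k:ℝ) ^ (a+1) + (a+1) * (k:ℝ) ^ a ≤ ((k:ℝ) + 1) ^ (a+1) := by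
        have h2 : (k:ℝ) ^ (a+1) * (1 + (a+1) * (1/(k:ℝ))) ≤ (k:ℝ) ^ (a+1) * (1 + 1/(k:ℝ)) ^ (a+1) :=
          mul_le_mul_of_nonneg_left hb (by positivity)
        rw [hmul] at h2
        have h3 : (k:ℝ) ^ (a+1) * (1/(k:ℝ)) = (k:ℝ) ^ a := by
          rw [Real.rpow_add_one hx0.ne']
          field_simp
        nlinarith [h3]
      have key2 : (k:ℝ) ^ (a+1) / (a+1) + (k:ℝ) ^ a ≤ ((k:ℝ) + 1) ^ (a+1) / (a+1) := by
        rw [div_add' _ _ _ hap.ne', div_le_div_iff_of_pos_right hap]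
        linarith [key]
      push_cast
      calc (∑ j ∈ Finset.Ico 1 k, (j:ℝ) ^ a) + (k:ℝ) ^ a
          ≤ (k:ℝ) ^ (a+1) / (a+1) + (k:ℝ) ^ a := add_le_add_left ih _
        _ ≤ ((k:ℝ) + 1) ^ (a+1) / (a+1) := key2

lemma sum_rpow_neg {a : ℝ} (ha : -1 < a) (ha0 : a ≤ 0) (i : ℕ) :
    ∑ j ∈ Finset.Ico 1 i, (j : ℝ) ^ a ≤ (i : ℝ) ^ (a + 1) / (a + 1) := by
  have hap : (0:ℝ) < a + 1 := by linarith
  have main : ∀ k : ℕ, ∑ j ∈ Finset.Ico 1 (k + 1), (j : ℝ) ^ a ≤ (k : ℝ) ^ (a + 1) / (a + 1) := by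
    intro k
    induction k with
    | zero => simp [Real.zero_rpow hap.ne']
    | succ k ih =>
      rw [Finset.sum_Ico_succ_top (by omega : 1 ≤ k + 1)]
      set y : ℝ := (k:ℝ) + 1 with hy
      have hy1 : (1:ℝ) ≤ y := by rw [hy]; have : (0:ℝ) ≤ (k:ℝ) := Nat.cast_nonneg k; linarith
      have hy0 : (0:ℝ) < y := by linarith
      -- Bernoulli: (1 - 1/y)^(a+1) ≤ 1 - (a+1)/y
      have hb := rpow_one_add_le_one_add_mul_self (s := -(1/y))
        (by rw [neg_le, neg_neg]; exact (div_le_one hy0).2 hy1) (p := a + 1)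
        hap.le (by linarith)
      have hmul : y ^ (a+1) * (1 + -(1/y)) ^ (a+1) = (k:ℝ) ^ (a+1) := by
        rw [← Real.mul_rpow hy0.le (by rw [← sub_eq_add_neg]; rw [sub_nonneg]; exact (div_le_one hy0).2 hy1)]
        congr 1
        field_simp [hy]
        linarith
      have key : (k:ℝ) ^ (a+1) + (a+1) * y ^ a ≤ y ^ (a+1) := by
        have h2 : y ^ (a+1) * (1 + -(1/y)) ^ (a+1) ≤ y ^ (a+1) * (1 + (a+1) * -(1/y)) :=
          mul_le_mul_of_nonneg_left hb (by positivity)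
        rw [hmul] at h2
        have h3 : y ^ (a+1) * (1/y) = y ^ a := by
          rw [Real.rpow_add_one hy0.ne']
          field_simp
        nlinarith [h3]
      have key2 : (k:ℝ) ^ (a+1) / (a+1) + y ^ a ≤ y ^ (a+1) / (a+1) := by
        rw [div_add' _ _ _ hap.ne', div_le_div_iff_of_pos_right hap]
        linarith [key]
      push_cast
      calc (∑ j ∈ Finset.Ico 1 (k+1), (j:ℝ) ^ a) + ((k:ℝ) + 1) ^ a
          ≤ (k:ℝ) ^ (a+1) / (a+1) + ((k:ℝ) + 1) ^ a := add_le_add_left ih _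
        _ ≤ ((k:ℝ) + 1) ^ (a+1) / (a+1) := key2
  rcases Nat.eq_zero_or_pos i with rfl | hi
  · simp [Real.zero_rpow hap.ne']
  · obtain ⟨k, rfl⟩ : ∃ k, i = k + 1 := ⟨i - 1, by omega⟩
    refine (main k).trans ?_
    apply div_le_div_of_nonneg_right ?_ hap.le
    apply Real.rpow_le_rpow (by positivity) (by push_cast; linarith) hap.le

lemma sum_rpow_le {a : ℝ} (ha : -1 < a) (i : ℕ) :
    ∑ j ∈ Finset.Ico 1 i, (j : ℝ) ^ a ≤ (i : ℝ) ^ (a + 1) / (a + 1) := by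
  rcases le_or_gt 0 a with h | h
  · exact sum_rpow_pos h i
  · exact sum_rpow_neg ha h.le i

end Aux

/-- Covariance function of fractional Brownian motion with Hurst parameter `H`. -/
noncomputable def RH (H t s : ℝ) : ℝ :=
  (t ^ (2 * H) + s ^ (2 * H) - |t - s| ^ (2 * H)) / 2

theorem statement12 (H : ℝ) (hH : 0 < H) (hH' : H < 1 / 2) :
    ∃ C : ℝ, 0 < C ∧ ∀ m n : ℕ, 2 ≤ n →
      ((n : ℝ) ^ 2)⁻¹ *
          ∑ i ∈ Finset.Ico 1 n, ∑ j ∈ Finset.Ico 1 i,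
            RH H ((i : ℝ) / n) ((j : ℝ) / n) ^ (2 * m) *
              ((i : ℝ) / n) ^ (-(H * (2 * (m : ℝ) + 1))) *
              ((j : ℝ) / n) ^ (-(H * (2 * (m : ℝ) + 1))) ≤
        C / (2 * H * m - H + 1) := by
  refine ⟨2, two_pos, fun m n hn => ?_⟩
  set N : ℝ := (n : ℝ) with hNdef
  have hN2 : (2:ℝ) ≤ N := by rw [hNdef]; exact_mod_cast hn
  have hN0 : (0:ℝ) < N := by linarith
  set p : ℝ := H * (2 * (m : ℝ) + 1) with hpdef
  set a : ℝ := 2 * H * (m : ℝ) - H with hadef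
  have hm0 : (0:ℝ) ≤ H * (m : ℝ) := by positivity
  have hap : (0:ℝ) < a + 1 := by rw [hadef]; nlinarith
  have ha : (-1:ℝ) < a := by linarith
  -- inner sum bound
  have hinner : ∀ i ∈ Finset.Ico 1 n,
      (∑ j ∈ Finset.Ico 1 i,
        RH H ((i : ℝ) / N) ((j : ℝ) / N) ^ (2 * m) *
          ((i : ℝ) / N) ^ (-p) * ((j : ℝ) / N) ^ (-p)) ≤ N / (a + 1) := by
    intro i hi
    rw [Finset.mem_Ico] at hi
    have hi0 : (0:ℝ) < (i:ℝ) := by exact_mod_cast hi.1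
    have hiN : (i:ℝ) ≤ N := by rw [hNdef]; exact_mod_cast hi.2.le
    have hti : (0:ℝ) < (i:ℝ) / N := by positivity
    -- termwise bound
    have hterm : ∀ j ∈ Finset.Ico 1 i,
        RH H ((i : ℝ) / N) ((j : ℝ) / N) ^ (2 * m) *
          ((i : ℝ) / N) ^ (-p) * ((j : ℝ) / N) ^ (-p) ≤
          ((j : ℝ) / N) ^ a * ((i : ℝ) / N) ^ (-p) := by
      intro j hj
      rw [Finset.mem_Ico] at hj
      have hj0 : (0:ℝ) < (j:ℝ) := by exact_mod_cast hj.1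
      have hji : (j:ℝ) ≤ (i:ℝ) := by exact_mod_cast hj.2.le
      have htj : (0:ℝ) < (j:ℝ) / N := by positivity
      have htji : (j:ℝ) / N ≤ (i:ℝ) / N := by gcongr
      have hdnn : (0:ℝ) ≤ (i:ℝ)/N - (j:ℝ)/N := by linarith
      have habs : |(i:ℝ)/N - (j:ℝ)/N| = (i:ℝ)/N - (j:ℝ)/N := abs_of_nonneg hdnn
      have h2H0 : (0:ℝ) ≤ 2 * H := by linarith
      have h2H1 : 2 * H ≤ 1 := by linarith
      have hsub : ((i:ℝ)/N - (j:ℝ)/N) ^ (2*H) ≤ ((i:ℝ)/N) ^ (2*H) :=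
        Real.rpow_le_rpow hdnn (by linarith) h2H0
      have hRH0 : 0 ≤ RH H ((i : ℝ) / N) ((j : ℝ) / N) := by
        rw [RH, habs]
        have := Real.rpow_nonneg htj.le (2*H)
        linarith
      have hRHle : RH H ((i : ℝ) / N) ((j : ℝ) / N) ≤ ((j:ℝ)/N) ^ (2*H) := by
        rw [RH, habs]
        have hsplit : ((i:ℝ)/N) ^ (2*H) ≤ ((j:ℝ)/N) ^ (2*H) + ((i:ℝ)/N - (j:ℝ)/N) ^ (2*H) := by
          have := aux_subadd htj.le hdnn h2H0 h2H1
          simpa using this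
        linarith
      have hpow : RH H ((i : ℝ) / N) ((j : ℝ) / N) ^ (2*m) ≤ (((j:ℝ)/N) ^ (2*H)) ^ (2*m) :=
        pow_le_pow_left₀ hRH0 hRHle _
      have hcollapse : (((j:ℝ)/N) ^ (2*H)) ^ (2*m) * ((j:ℝ)/N) ^ (-p) = ((j:ℝ)/N) ^ a := by
        rw [← Real.rpow_natCast (((j:ℝ)/N) ^ (2*H)) (2*m), ← Real.rpow_mul htj.le,
          ← Real.rpow_add htj]
        congr 1
        push_cast [hpdef, hadef]
        ring
      calc RH H ((i : ℝ) / N) ((j : ℝ) / N) ^ (2 * m) * ((i : ℝ) / N) ^ (-p) * ((j : ℝ) / N) ^ (-p)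
          ≤ (((j:ℝ)/N) ^ (2*H)) ^ (2*m) * ((i : ℝ) / N) ^ (-p) * ((j : ℝ) / N) ^ (-p) := by
            have h1 : (0:ℝ) ≤ ((i : ℝ) / N) ^ (-p) := Real.rpow_nonneg hti.le _
            have h2 : (0:ℝ) ≤ ((j : ℝ) / N) ^ (-p) := Real.rpow_nonneg htj.le _
            exact mul_le_mul_of_nonneg_right (mul_le_mul_of_nonneg_right hpow h1) h2
        _ = ((j : ℝ) / N) ^ a * ((i : ℝ) / N) ^ (-p) := by
            rw [mul_right_comm, hcollapse]
    have hsumj : (∑ j ∈ Finset.Ico 1 i, ((j : ℝ) / N) ^ a) ≤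
        ((i:ℝ) ^ (a+1) / (a+1)) / N ^ a := by
      have heq : (∑ j ∈ Finset.Ico 1 i, ((j : ℝ) / N) ^ a) =
          (∑ j ∈ Finset.Ico 1 i, (j : ℝ) ^ a) / N ^ a := by
        rw [Finset.sum_div]
        exact Finset.sum_congr rfl fun j _ => Real.div_rpow (Nat.cast_nonneg j) hN0.le a
      rw [heq]
      exact div_le_div_of_nonneg_right (sum_rpow_le ha i) (Real.rpow_nonneg hN0.le a)
    have hclaim : (i:ℝ) ^ (a+1) * ((i:ℝ)/N) ^ (-p) ≤ N ^ (a+1) := by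
      have h1 : ((i:ℝ)/N) ^ (-p) = (i:ℝ) ^ (-p) * N ^ p := by
        rw [Real.div_rpow (Nat.cast_nonneg i) hN0.le, div_eq_mul_inv,
          Real.rpow_neg hN0.le p, inv_inv]
      rw [h1, ← mul_assoc, ← Real.rpow_add hi0]
      have he : a + 1 + -p = 1 - 2*H := by rw [hadef, hpdef]; ring
      rw [he]
      have h2 : (i:ℝ) ^ (1 - 2*H) ≤ N ^ (1 - 2*H) :=
        Real.rpow_le_rpow hi0.le hiN (by linarith)
      calc (i:ℝ) ^ (1 - 2*H) * N ^ p ≤ N ^ (1 - 2*H) * N ^ p :=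
            mul_le_mul_of_nonneg_right h2 (Real.rpow_nonneg hN0.le p)
        _ = N ^ (a+1) := by
            rw [← Real.rpow_add hN0]
            congr 1
            rw [hadef, hpdef]; ring
    calc (∑ j ∈ Finset.Ico 1 i,
        RH H ((i : ℝ) / N) ((j : ℝ) / N) ^ (2 * m) *
          ((i : ℝ) / N) ^ (-p) * ((j : ℝ) / N) ^ (-p))
        ≤ ∑ j ∈ Finset.Ico 1 i, ((j : ℝ) / N) ^ a * ((i : ℝ) / N) ^ (-p) :=
          Finset.sum_le_sum hterm
      _ = (∑ j ∈ Finset.Ico 1 i, ((j : ℝ) / N) ^ a) * ((i : ℝ) / N) ^ (-p) := by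
          rw [Finset.sum_mul]
      _ ≤ (((i:ℝ) ^ (a+1) / (a+1)) / N ^ a) * ((i : ℝ) / N) ^ (-p) :=
          mul_le_mul_of_nonneg_right hsumj (Real.rpow_nonneg hti.le _)
      _ = ((i:ℝ) ^ (a+1) * ((i:ℝ)/N) ^ (-p)) / ((a+1) * N ^ a) := by
          field_simp
      _ ≤ N ^ (a+1) / ((a+1) * N ^ a) := by
          apply div_le_div_of_nonneg_right hclaim
          positivity
      _ = N / (a + 1) := by
          have hNa : N ^ a ≠ 0 := by positivity
          rw [Real.rpow_add_one hN0.ne' a, mul_comm (a+1) (N^a), mul_div_mul_left _ _ hNa]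
  have hcard : ((Finset.Ico 1 n).card : ℝ) ≤ N := by
    rw [hNdef, Nat.card_Ico]
    exact_mod_cast Nat.sub_le n 1
  have houter : (∑ i ∈ Finset.Ico 1 n, ∑ j ∈ Finset.Ico 1 i,
      RH H ((i : ℝ) / N) ((j : ℝ) / N) ^ (2 * m) *
        ((i : ℝ) / N) ^ (-p) * ((j : ℝ) / N) ^ (-p)) ≤ N * (N / (a + 1)) := by
    calc (∑ i ∈ Finset.Ico 1 n, ∑ j ∈ Finset.Ico 1 i,
        RH H ((i : ℝ) / N) ((j : ℝ) / N) ^ (2 * m) *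
          ((i : ℝ) / N) ^ (-p) * ((j : ℝ) / N) ^ (-p))
        ≤ ∑ _i ∈ Finset.Ico 1 n, N / (a + 1) := Finset.sum_le_sum hinner
      _ = ((Finset.Ico 1 n).card : ℝ) * (N / (a + 1)) := by
          rw [Finset.sum_const, nsmul_eq_mul]
      _ ≤ N * (N / (a + 1)) := by
          apply mul_le_mul_of_nonneg_right hcard
          positivity
  have hfinal : (N ^ 2)⁻¹ * (N * (N / (a + 1))) = 1 / (a + 1) := by
    rw [sq]
    field_simp [hN0.ne', hap.ne']
  calc ((n : ℝ) ^ 2)⁻¹ *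
      ∑ i ∈ Finset.Ico 1 n, ∑ j ∈ Finset.Ico 1 i,
        RH H ((i : ℝ) / n) ((j : ℝ) / n) ^ (2 * m) *
          ((i : ℝ) / n) ^ (-(H * (2 * (m : ℝ) + 1))) *
          ((j : ℝ) / n) ^ (-(H * (2 * (m : ℝ) + 1)))
      ≤ (N ^ 2)⁻¹ * (N * (N / (a + 1))) := by
        apply mul_le_mul_of_nonneg_left houter
        positivity
    _ = 1 / (a + 1) := hfinal
    _ ≤ 2 / (2 * H * m - H + 1) := by
        show (1:ℝ)/(a+1) ≤ 2/(a+1)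
        rw [div_le_div_iff_of_pos_right hap]
        norm_num
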